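/- arXiv:2004.14697 — 3 statements merged into one kernel-verified Lean document; each statement's English description precedes it below -/
import Mathlib

section
/- Let Ω ⊆ ℝ^n be open and u : Ω → ℝ a smooth function whose Hessian matrix H(x) = (∂²u/∂x^i∂x^j(x)) is positive definite at every point of Ω; write (u^{ij}) for the entries of H^{-1} and V = (det H)^{-1/2}. Then the function s := −(1/2) ∑_{i,j=1}^n ∂²u^{ij}/∂x^i∂x^j (Abreu's formula for the scalar curvature of the associated toric Kähler metric) satisfies, at every point of Ω, s = −∑_{i,j=1}^n ∂/∂x^i ( u^{ij} ∂(log V)/∂x^j ). -/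
open Real Set Topology Filter Matrix

/-- `i`-th partial derivative of a function on `ℝⁿ`. -/
noncomputable def pd {n : ℕ} (i : Fin n) (f : (Fin n → ℝ) → ℝ) : (Fin n → ℝ) → ℝ :=
  fun x => fderiv ℝ f x (Pi.single i 1)

/-- Hessian matrix of a function on `ℝⁿ`. -/
noncomputable def Hess {n : ℕ} (u : (Fin n → ℝ) → ℝ) (x : Fin n → ℝ) :
    Matrix (Fin n) (Fin n) ℝ :=
  Matrix.of fun i j => pd i (pd j u) x

/-- The orbital volume function `V = (det Hess u)^(-1/2)`. -/
noncomputable def orbVol {n : ℕ} (u : (Fin n → ℝ) → ℝ) : (Fin n → ℝ) → ℝ :=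
  fun x => (Hess u x).det ^ (-(1/2 : ℝ))

section Aux
attribute [local instance] Matrix.linftyOpNormedRing Matrix.linftyOpNormedAlgebra

variable {n : ℕ} {Ω : Set (Fin n → ℝ)} {u : (Fin n → ℝ) → ℝ} {y : Fin n → ℝ}

noncomputable def toMatL (n : ℕ) : (Fin n → Fin n → ℝ) ≃L[ℝ] Matrix (Fin n) (Fin n) ℝ :=
  LinearEquiv.toContinuousLinearEquiv
  { toFun := Matrix.of, invFun := Matrix.of.symm,
    map_add' := fun _ _ => rfl, map_smul' := fun _ _ => rfl,
    left_inv := fun _ => rfl, right_inv := fun _ => rfl }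

noncomputable def entryCLM (n : ℕ) (i j : Fin n) : Matrix (Fin n) (Fin n) ℝ →L[ℝ] ℝ :=
  (ContinuousLinearMap.proj j).comp ((ContinuousLinearMap.proj i).comp
    (toMatL n).symm.toContinuousLinearMap)

lemma entryCLM_apply (i j : Fin n) (A : Matrix (Fin n) (Fin n) ℝ) :
    entryCLM n i j A = A i j := rfl

lemma diffAt_of_contDiffOn (hΩ : IsOpen Ω) {F : Type*} [NormedAddCommGroup F]
    [NormedSpace ℝ F] {f : (Fin n → ℝ) → F}
    (hf : ContDiffOn ℝ (⊤ : ℕ∞) f Ω) (hy : y ∈ Ω) : DifferentiableAt ℝ f y :=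
  (hf.contDiffAt (hΩ.mem_nhds hy)).differentiableAt (by simp)

lemma pd_contDiffOn (hΩ : IsOpen Ω) {f : (Fin n → ℝ) → ℝ}
    (hf : ContDiffOn ℝ (⊤ : ℕ∞) f Ω) (i : Fin n) :
    ContDiffOn ℝ (⊤ : ℕ∞) (pd i f) Ω := by
  have h1 : ContDiffOn ℝ (⊤ : ℕ∞) (fderivWithin ℝ f Ω) Ω :=
    hf.fderivWithin hΩ.uniqueDiffOn (by simp)
  have h2 : ContDiffOn ℝ (⊤ : ℕ∞) (fun z => fderivWithin ℝ f Ω z (Pi.single i 1)) Ω :=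
    h1.clm_apply contDiffOn_const
  exact h2.congr fun z hz => by
    show fderiv ℝ f z (Pi.single i 1) = _
    rw [fderivWithin_of_isOpen hΩ hz]

lemma pd_congr {f g : (Fin n → ℝ) → ℝ} {x : Fin n → ℝ} (i : Fin n)
    (h : f =ᶠ[𝓝 x] g) : pd i f x = pd i g x := by
  unfold pd; rw [h.fderiv_eq]

lemma pd_hasFDerivAt {f : (Fin n → ℝ) → ℝ} {x : Fin n → ℝ} {L : (Fin n → ℝ) →L[ℝ] ℝ}
    (i : Fin n) (h : HasFDerivAt f L x) : pd i f x = L (Pi.single i 1) := by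
  unfold pd; rw [h.fderiv]

lemma pd_sum {ι : Type*} {s : Finset ι} {A : ι → (Fin n → ℝ) → ℝ} {x : Fin n → ℝ} (i : Fin n)
    (h : ∀ j ∈ s, DifferentiableAt ℝ (A j) x) :
    pd i (fun z => ∑ j ∈ s, A j z) x = ∑ j ∈ s, pd i (A j) x := by
  unfold pd; rw [fderiv_fun_sum h]; simp

lemma pd_const_mul {f : (Fin n → ℝ) → ℝ} {x : Fin n → ℝ} (i : Fin n) (c : ℝ)
    (h : DifferentiableAt ℝ f x) :
    pd i (fun z => c * f z) x = c * pd i f x := by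
  unfold pd; rw [fderiv_const_mul h]; simp

lemma pd_comm (hΩ : IsOpen Ω) {f : (Fin n → ℝ) → ℝ}
    (hf : ContDiffOn ℝ (⊤ : ℕ∞) f Ω) (hy : y ∈ Ω) (i j : Fin n) :
    pd i (pd j f) y = pd j (pd i f) y := by
  have hmem := hΩ.mem_nhds hy
  have hev : ∀ᶠ z in 𝓝 y, HasFDerivAt f (fderiv ℝ f z) z := by
    filter_upwards [hΩ.mem_nhds hy] with z hz
    exact (diffAt_of_contDiffOn hΩ hf hz).hasFDerivAt
  have hd' : DifferentiableAt ℝ (fderiv ℝ f) y := by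
    have h1 : ContDiffOn ℝ (⊤ : ℕ∞) (fderivWithin ℝ f Ω) Ω :=
      hf.fderivWithin hΩ.uniqueDiffOn (by simp)
    have h2 : DifferentiableAt ℝ (fderivWithin ℝ f Ω) y := diffAt_of_contDiffOn hΩ h1 hy
    have hee : fderivWithin ℝ f Ω =ᶠ[𝓝 y] fderiv ℝ f := by
      filter_upwards [hΩ.mem_nhds hy] with z hz
      exact fderivWithin_of_isOpen hΩ hz
    exact h2.congr_of_eventuallyEq hee.symm
  have hsymm := second_derivative_symmetric_of_eventually hev hd'.hasFDerivAt
    (Pi.single i 1) (Pi.single j 1)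
  have key : ∀ a b : Fin n,
      pd a (pd b f) y = fderiv ℝ (fderiv ℝ f) y (Pi.single a 1) (Pi.single b 1) := by
    intro a b
    have : pd b f = fun z => fderiv ℝ f z (Pi.single b 1) := rfl
    unfold pd
    rw [fderiv_clm_apply hd' (differentiableAt_const _)]
    simp
  rw [key i j, key j i, hsymm]


lemma hessEnt_smooth (hΩ : IsOpen Ω) (hu : ContDiffOn ℝ (⊤ : ℕ∞) u Ω) (i j : Fin n) :
    ContDiffOn ℝ (⊤ : ℕ∞) (pd i (pd j u)) Ω :=
  pd_contDiffOn hΩ (pd_contDiffOn hΩ hu j) i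

noncomputable def HessD (u : (Fin n → ℝ) → ℝ) (y : Fin n → ℝ) :
    (Fin n → ℝ) →L[ℝ] Matrix (Fin n) (Fin n) ℝ :=
  ((toMatL n).toContinuousLinearMap).comp
    (ContinuousLinearMap.pi fun i => ContinuousLinearMap.pi fun j =>
      fderiv ℝ (pd i (pd j u)) y)

lemma HessD_apply (v : Fin n → ℝ) (i j : Fin n) :
    HessD u y v i j = fderiv ℝ (pd i (pd j u)) y v := rfl

lemma hess_hasFDerivAt (hΩ : IsOpen Ω) (hu : ContDiffOn ℝ (⊤ : ℕ∞) u Ω) (hy : y ∈ Ω) :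
    HasFDerivAt (Hess u) (HessD u y) y := by
  have h0 : HasFDerivAt (fun z => (fun i j => pd i (pd j u) z))
      (ContinuousLinearMap.pi fun i => ContinuousLinearMap.pi fun j =>
        fderiv ℝ (pd i (pd j u)) y) y := by
    rw [hasFDerivAt_pi]
    intro i
    rw [hasFDerivAt_pi]
    intro j
    exact (diffAt_of_contDiffOn hΩ (hessEnt_smooth hΩ hu i j) hy).hasFDerivAt
  exact ((toMatL n).toContinuousLinearMap.hasFDerivAt.comp y h0 :)

lemma isUnit_hess (hpos : ∀ x ∈ Ω, (Hess u x).PosDef) (hy : y ∈ Ω) :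
    IsUnit (Hess u y) :=
  (Matrix.isUnit_iff_isUnit_det _).2 (isUnit_iff_ne_zero.2 (hpos y hy).det_pos.ne')

lemma hInv_hasFDerivAt (hΩ : IsOpen Ω) (hu : ContDiffOn ℝ (⊤ : ℕ∞) u Ω)
    (hpos : ∀ x ∈ Ω, (Hess u x).PosDef) (hy : y ∈ Ω) :
    HasFDerivAt (fun z => (Hess u z)⁻¹)
      ((-(ContinuousLinearMap.mulLeftRight ℝ _ (Hess u y)⁻¹ (Hess u y)⁻¹)).comp
        (HessD u y)) y := by
  have hunit := isUnit_hess hpos hy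
  have h2 := hasFDerivAt_ringInverse (𝕜 := ℝ) hunit.unit
  rw [Matrix.coe_units_inv, hunit.unit_spec] at h2
  have h3 := h2.comp y (hess_hasFDerivAt hΩ hu hy)
  have h4 : (fun z => (Hess u z)⁻¹) = (Ring.inverse ∘ Hess u) := by
    funext z; exact Matrix.nonsing_inv_eq_ringInverse _
  rw [h4]
  exact h3

lemma pd_inv_entry (hΩ : IsOpen Ω) (hu : ContDiffOn ℝ (⊤ : ℕ∞) u Ω)
    (hpos : ∀ x ∈ Ω, (Hess u x).PosDef) (hy : y ∈ Ω) (m i j : Fin n) :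
    pd m (fun z => ((Hess u z)⁻¹) i j) y
      = -∑ k, ∑ l, ((Hess u y)⁻¹) i k * pd m (pd k (pd l u)) y * ((Hess u y)⁻¹) l j := by
  have h5 := ((entryCLM n i j).hasFDerivAt.comp y (hInv_hasFDerivAt hΩ hu hpos hy) :)
  have h5' : HasFDerivAt (fun z => ((Hess u z)⁻¹) i j)
      ((entryCLM n i j).comp
        ((-(ContinuousLinearMap.mulLeftRight ℝ _ (Hess u y)⁻¹ (Hess u y)⁻¹)).comp
          (HessD u y))) y := h5
  unfold pd
  rw [h5'.fderiv]
  show entryCLM n i j (-((Hess u y)⁻¹ * HessD u y (Pi.single m 1) * (Hess u y)⁻¹)) = _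
  rw [entryCLM_apply]
  show -(((Hess u y)⁻¹ * HessD u y (Pi.single m 1) * (Hess u y)⁻¹) i j) = _
  have hB : ∀ k l, HessD u y (Pi.single m 1) k l = pd m (pd k (pd l u)) y := fun k l => rfl
  rw [Matrix.mul_apply]
  simp only [Matrix.mul_apply, Finset.sum_mul, hB]
  rw [Finset.sum_comm]
  simp only [mul_assoc, neg_inj]
  rfl


-- smoothness of inverse entries
lemma inv_entry_contDiffOn (hΩ : IsOpen Ω) (hu : ContDiffOn ℝ (⊤ : ℕ∞) u Ω)
    (hpos : ∀ x ∈ Ω, (Hess u x).PosDef) (i j : Fin n) :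
    ContDiffOn ℝ (⊤ : ℕ∞) (fun z => ((Hess u z)⁻¹) i j) Ω := by
  intro y hy
  apply ContDiffAt.contDiffWithinAt
  have hH : ContDiffAt ℝ (⊤ : ℕ∞) (Hess u) y := by
    have h0 : ContDiffAt ℝ (⊤ : ℕ∞) (fun z => (fun a b => pd a (pd b u) z)) y :=
      contDiffAt_pi.2 fun a => contDiffAt_pi.2 fun b =>
        (hessEnt_smooth hΩ hu a b).contDiffAt (hΩ.mem_nhds hy)
    exact ((toMatL n).toContinuousLinearMap.contDiff.contDiffAt.comp y h0 :)
  have hinv : ContDiffAt ℝ (⊤ : ℕ∞) Ring.inverse (Hess u y) := by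
    have h1 := contDiffAt_ringInverse (𝕜 := ℝ) (R := Matrix (Fin n) (Fin n) ℝ)
      (n := ((⊤ : ℕ∞) : WithTop ℕ∞)) (isUnit_hess hpos hy).unit
    rwa [(isUnit_hess hpos hy).unit_spec] at h1
  have hcomp := hinv.comp y hH
  have hentry : ContDiffAt ℝ (⊤ : ℕ∞) (fun z => Ring.inverse (Hess u z) i j) y := by
    have hproj : ContDiff ℝ (⊤ : ℕ∞)
        (fun A : Matrix (Fin n) (Fin n) ℝ => A i j) := by
      have := ((ContinuousLinearMap.proj j).comp ((ContinuousLinearMap.proj i).comp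
        (toMatL n).symm.toContinuousLinearMap)).contDiff
        (𝕜 := ℝ) (n := (⊤ : ℕ∞))
      exact this
    exact hproj.contDiffAt.comp y hcomp
  have : (fun z => ((Hess u z)⁻¹) i j) = fun z => Ring.inverse (Hess u z) i j := by
    funext z; rw [Matrix.nonsing_inv_eq_ringInverse]
  rw [this]
  exact hentry

-- determinant as continuous multilinear map of rows
noncomputable def detCM (n : ℕ) : ContinuousMultilinearMap ℝ (fun _ : Fin n => (Fin n → ℝ)) ℝ :=
  { (Matrix.detRowAlternating : AlternatingMap ℝ (Fin n → ℝ) ℝ (Fin n)).toMultilinearMap with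
    cont := by
      have h : Continuous fun r : Fin n → Fin n → ℝ => (Matrix.of r).det :=
        Continuous.matrix_det (by continuity)
      exact h }

lemma det_updateRow_eq_sum (A : Matrix (Fin n) (Fin n) ℝ) (k : Fin n) (b : Fin n → ℝ) :
    (A.updateRow k b).det = ∑ l, b l * A.adjugate l k := by
  rw [← Matrix.cramer_transpose_apply]
  have hb : b = ∑ l, (b l) • (Pi.single l 1 : Fin n → ℝ) := by
    funext j
    simp [Pi.single_apply]
  conv_lhs => rw [hb]
  rw [map_sum, Finset.sum_apply]
  refine Finset.sum_congr rfl fun l _ => ?_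
  rw [_root_.map_smul, Pi.smul_apply, smul_eq_mul, Matrix.adjugate_apply,
    ← Matrix.cramer_transpose_apply]

lemma det_hasFDerivAt (hΩ : IsOpen Ω) (hu : ContDiffOn ℝ (⊤ : ℕ∞) u Ω) (hy : y ∈ Ω) :
    HasFDerivAt (fun z => (Hess u z).det)
      (∑ k, ((detCM n).toContinuousLinearMap (fun a b => pd a (pd b u) y) k).comp
        (ContinuousLinearMap.pi fun l => fderiv ℝ (pd k (pd l u)) y)) y := by
  have hg : ∀ k : Fin n, HasFDerivAt (fun z => (fun l => pd k (pd l u) z))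
      (ContinuousLinearMap.pi fun l => fderiv ℝ (pd k (pd l u)) y) y := by
    intro k
    rw [hasFDerivAt_pi]
    intro l
    exact (diffAt_of_contDiffOn hΩ (hessEnt_smooth hΩ hu k l) hy).hasFDerivAt
  exact (HasFDerivAt.multilinear_comp (detCM n) hg :)

lemma pd_det (hΩ : IsOpen Ω) (hu : ContDiffOn ℝ (⊤ : ℕ∞) u Ω) (hy : y ∈ Ω) (m : Fin n) :
    pd m (fun z => (Hess u z).det) y
      = ∑ k, ∑ l, pd m (pd k (pd l u)) y * (Hess u y).adjugate l k := by
  unfold pd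
  rw [(det_hasFDerivAt hΩ hu hy).fderiv]
  rw [ContinuousLinearMap.sum_apply]
  refine Finset.sum_congr rfl fun k _ => ?_
  show (detCM n).toContinuousLinearMap (fun a b => pd a (pd b u) y) k
      (fun l => fderiv ℝ (pd k (pd l u)) y (Pi.single m 1)) = _
  have h1 : (detCM n).toContinuousLinearMap (fun a b => pd a (pd b u) y) k
      (fun l => fderiv ℝ (pd k (pd l u)) y (Pi.single m 1))
      = ((Hess u y).updateRow k
          (fun l => fderiv ℝ (pd k (pd l u)) y (Pi.single m 1))).det := rfl
  rw [h1, det_updateRow_eq_sum]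
  rfl

lemma adjugate_eq_det_smul_inv (hpos : ∀ x ∈ Ω, (Hess u x).PosDef) (hy : y ∈ Ω) :
    (Hess u y).adjugate = (Hess u y).det • (Hess u y)⁻¹ := by
  rw [Matrix.inv_def, smul_smul, Ring.inverse_eq_inv,
    mul_inv_cancel₀ (hpos y hy).det_pos.ne', one_smul]

lemma pd_log_det (hΩ : IsOpen Ω) (hu : ContDiffOn ℝ (⊤ : ℕ∞) u Ω)
    (hpos : ∀ x ∈ Ω, (Hess u x).PosDef) (hy : y ∈ Ω) (m : Fin n) :
    pd m (fun z => Real.log ((Hess u z).det)) y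
      = ∑ k, ∑ l, pd m (pd k (pd l u)) y * ((Hess u y)⁻¹) l k := by
  have hdpos := (hpos y hy).det_pos
  have hlog : HasDerivAt Real.log ((Hess u y).det)⁻¹ ((Hess u y).det) :=
    Real.hasDerivAt_log hdpos.ne'
  have hdet := det_hasFDerivAt hΩ hu hy
  have hcomp : HasFDerivAt (fun z => Real.log ((Hess u z).det))
      ((Hess u y).det⁻¹ • ∑ k, ((detCM n).toContinuousLinearMap
          (fun a b => pd a (pd b u) y) k).comp
        (ContinuousLinearMap.pi fun l => fderiv ℝ (pd k (pd l u)) y)) y :=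
    HasDerivAt.comp_hasFDerivAt (h₂ := Real.log) y hlog hdet
  rw [pd_hasFDerivAt m hcomp]
  rw [ContinuousLinearMap.smul_apply, smul_eq_mul]
  have hval : (∑ k, ((detCM n).toContinuousLinearMap (fun a b => pd a (pd b u) y) k).comp
        (ContinuousLinearMap.pi fun l => fderiv ℝ (pd k (pd l u)) y)) (Pi.single m 1)
      = ∑ k, ∑ l, pd m (pd k (pd l u)) y * (Hess u y).adjugate l k := by
    rw [← pd_hasFDerivAt m (det_hasFDerivAt hΩ hu hy)]
    exact pd_det hΩ hu hy m
  rw [hval, adjugate_eq_det_smul_inv hpos hy]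
  rw [Finset.mul_sum]
  refine Finset.sum_congr rfl fun k _ => ?_
  rw [Finset.mul_sum]
  refine Finset.sum_congr rfl fun l _ => ?_
  rw [Matrix.smul_apply, smul_eq_mul]
  field_simp

lemma pd_log_orbVol (hΩ : IsOpen Ω) (hu : ContDiffOn ℝ (⊤ : ℕ∞) u Ω)
    (hpos : ∀ x ∈ Ω, (Hess u x).PosDef) (hy : y ∈ Ω) (m : Fin n) :
    pd m (fun z => Real.log (orbVol u z)) y
      = -(1/2 : ℝ) * ∑ k, ∑ l, pd m (pd k (pd l u)) y * ((Hess u y)⁻¹) l k := by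
  have hev : (fun z => Real.log (orbVol u z))
      =ᶠ[𝓝 y] fun z => -(1/2 : ℝ) * Real.log ((Hess u z).det) := by
    filter_upwards [hΩ.mem_nhds hy] with z hz
    simp [orbVol, Real.log_rpow (hpos z hz).det_pos]
  have hdiff : DifferentiableAt ℝ (fun z => Real.log ((Hess u z).det)) y := by
    have hdpos := (hpos y hy).det_pos
    exact ((Real.hasDerivAt_log hdpos.ne').comp_hasFDerivAt y
      (det_hasFDerivAt hΩ hu hy)).differentiableAt
  rw [pd_congr m hev, pd_const_mul m _ hdiff, pd_log_det hΩ hu hpos hy m]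


lemma main9 (hΩ : IsOpen Ω) (hu : ContDiffOn ℝ (⊤ : ℕ∞) u Ω)
    (hpos : ∀ x ∈ Ω, (Hess u x).PosDef) (hy : y ∈ Ω) (i : Fin n) :
    ∑ j, ((Hess u y)⁻¹) i j
        * (-(1/2 : ℝ) * ∑ k, ∑ l, pd j (pd k (pd l u)) y * ((Hess u y)⁻¹) l k)
      = (1/2 : ℝ) * ∑ j, pd j (fun z => ((Hess u z)⁻¹) i j) y := by
  have key : ∑ j, ∑ k, ∑ l, ((Hess u y)⁻¹) i k * pd j (pd k (pd l u)) y * ((Hess u y)⁻¹) l j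
      = ∑ j, ∑ k, ∑ l, ((Hess u y)⁻¹) i j
          * (pd j (pd k (pd l u)) y * ((Hess u y)⁻¹) l k) := by
    rw [Finset.sum_comm]
    refine Finset.sum_congr rfl fun j _ => Finset.sum_congr rfl fun k _ =>
      Finset.sum_congr rfl fun l _ => ?_
    rw [pd_comm hΩ (pd_contDiffOn hΩ hu l) hy k j, mul_assoc]
  calc ∑ j, ((Hess u y)⁻¹) i j
        * (-(1/2 : ℝ) * ∑ k, ∑ l, pd j (pd k (pd l u)) y * ((Hess u y)⁻¹) l k)
      = ∑ j, -(1/2 : ℝ) * ∑ k, ∑ l, ((Hess u y)⁻¹) i j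
          * (pd j (pd k (pd l u)) y * ((Hess u y)⁻¹) l k) := by
        refine Finset.sum_congr rfl fun j _ => ?_
        rw [mul_left_comm]
        congr 1
        rw [Finset.mul_sum]
        exact Finset.sum_congr rfl fun k _ => by rw [Finset.mul_sum]
    _ = -(1/2 : ℝ) * ∑ j, ∑ k, ∑ l, ((Hess u y)⁻¹) i j
          * (pd j (pd k (pd l u)) y * ((Hess u y)⁻¹) l k) := by rw [← Finset.mul_sum]
    _ = -(1/2 : ℝ) * ∑ j, ∑ k, ∑ l, ((Hess u y)⁻¹) i k * pd j (pd k (pd l u)) y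
          * ((Hess u y)⁻¹) l j := by rw [key]
    _ = (1/2 : ℝ) * ∑ j, pd j (fun z => ((Hess u z)⁻¹) i j) y := by
        have h : ∀ j : Fin n, pd j (fun z => ((Hess u z)⁻¹) i j) y
            = -∑ k, ∑ l, ((Hess u y)⁻¹) i k * pd j (pd k (pd l u)) y * ((Hess u y)⁻¹) l j :=
          fun j => pd_inv_entry hΩ hu hpos hy j i j
        simp only [h]
        rw [Finset.sum_neg_distrib]
        ring


end Aux

theorem stmt3 (n : ℕ) (Ω : Set (Fin n → ℝ)) (hΩ : IsOpen Ω)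
    (u : (Fin n → ℝ) → ℝ) (hu : ContDiffOn ℝ (⊤ : ℕ∞) u Ω)
    (hpos : ∀ x ∈ Ω, (Hess u x).PosDef)
    (x : Fin n → ℝ) (hx : x ∈ Ω) :
    -(1/2 : ℝ) * ∑ i, ∑ j, pd i (pd j (fun y => ((Hess u y)⁻¹) i j)) x
      = -∑ i, ∑ j, pd i (fun y => ((Hess u y)⁻¹) i j
          * pd j (fun z => Real.log (orbVol u z)) y) x := by
  set φ : Fin n → (Fin n → ℝ) → ℝ := fun j w =>
    -(1/2 : ℝ) * ∑ k, ∑ l, pd j (pd k (pd l u)) w * ((Hess u w)⁻¹) l k with hφ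
  have h3sm : ∀ j k l : Fin n, ContDiffOn ℝ (⊤ : ℕ∞) (pd j (pd k (pd l u))) Ω :=
    fun j k l => pd_contDiffOn hΩ (pd_contDiffOn hΩ (pd_contDiffOn hΩ hu l) k) j
  have hWsm : ∀ i j : Fin n, ContDiffOn ℝ (⊤ : ℕ∞) (fun z => ((Hess u z)⁻¹) i j) Ω :=
    fun i j => inv_entry_contDiffOn hΩ hu hpos i j
  have hφdiff : ∀ j : Fin n, DifferentiableAt ℝ (φ j) x := by
    intro j
    refine DifferentiableAt.const_mul ?_ _
    exact DifferentiableAt.fun_sum fun k _ => DifferentiableAt.fun_sum fun l _ =>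
      (diffAt_of_contDiffOn hΩ (h3sm j k l) hx).mul (diffAt_of_contDiffOn hΩ (hWsm l k) hx)
  have hsum : ∀ i : Fin n,
      ∑ j, pd i (fun y => ((Hess u y)⁻¹) i j
        * pd j (fun z => Real.log (orbVol u z)) y) x
      = (1/2 : ℝ) * ∑ j, pd i (pd j (fun z => ((Hess u z)⁻¹) i j)) x := by
    intro i
    have step1 : ∀ j : Fin n, pd i (fun y => ((Hess u y)⁻¹) i j
          * pd j (fun z => Real.log (orbVol u z)) y) x
        = pd i (fun y => ((Hess u y)⁻¹) i j * φ j y) x := by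
      intro j
      refine pd_congr i ?_
      filter_upwards [hΩ.mem_nhds hx] with z hz
      rw [pd_log_orbVol hΩ hu hpos hz j]
    have step2 : ∑ j, pd i (fun y => ((Hess u y)⁻¹) i j * φ j y) x
        = pd i (fun y => ∑ j, ((Hess u y)⁻¹) i j * φ j y) x :=
      (pd_sum i fun j _ =>
        (diffAt_of_contDiffOn hΩ (hWsm i j) hx).mul (hφdiff j)).symm
    have step3 : pd i (fun y => ∑ j, ((Hess u y)⁻¹) i j * φ j y) x
        = pd i (fun y => (1/2 : ℝ) * ∑ j, pd j (fun z => ((Hess u z)⁻¹) i j) y) x := by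
      refine pd_congr i ?_
      filter_upwards [hΩ.mem_nhds hx] with z hz
      exact main9 hΩ hu hpos hz i
    have step4 : pd i (fun y => (1/2 : ℝ) * ∑ j, pd j (fun z => ((Hess u z)⁻¹) i j) y) x
        = (1/2 : ℝ) * pd i (fun y => ∑ j, pd j (fun z => ((Hess u z)⁻¹) i j) y) x :=
      pd_const_mul i _ (DifferentiableAt.fun_sum fun j _ =>
        diffAt_of_contDiffOn hΩ (pd_contDiffOn hΩ (hWsm i j) j) hx)
    have step5 : pd i (fun y => ∑ j, pd j (fun z => ((Hess u z)⁻¹) i j) y) x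
        = ∑ j, pd i (pd j (fun z => ((Hess u z)⁻¹) i j)) x :=
      pd_sum i fun j _ => diffAt_of_contDiffOn hΩ (pd_contDiffOn hΩ (hWsm i j) j) hx
    calc ∑ j, pd i (fun y => ((Hess u y)⁻¹) i j
          * pd j (fun z => Real.log (orbVol u z)) y) x
        = ∑ j, pd i (fun y => ((Hess u y)⁻¹) i j * φ j y) x :=
          Finset.sum_congr rfl fun j _ => step1 j
      _ = (1/2 : ℝ) * ∑ j, pd i (pd j (fun z => ((Hess u z)⁻¹) i j)) x := by
          rw [step2, step3, step4, step5]
  rw [show ∑ i, ∑ j, pd i (fun y => ((Hess u y)⁻¹) i j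
        * pd j (fun z => Real.log (orbVol u z)) y) x
      = ∑ i : Fin n, (1/2 : ℝ) * ∑ j, pd i (pd j (fun z => ((Hess u z)⁻¹) i j)) x from
    Finset.sum_congr rfl fun i _ => hsum i, ← Finset.mul_sum]
  ring
end

section
/- Let Ω ⊆ ℝ^n be open and u : Ω → ℝ a smooth function whose Hessian matrix H(x) is positive definite at every point of Ω; write (u_{ij}) for the entries of H, (u^{ij}) for the entries of H^{-1}, V = (det H)^{-1/2}, and R(x) for the matrix with entries R_{ij}(x) = −∑_{l,k=1}^n u_{il}(x) ∂/∂x^j ( u^{lk} ∂(log V)/∂x^k )(x). Let x₀ ∈ Ω be a critical point of V. If R(x₀) is positive definite, then x₀ is a strict local maximum of V and is an isolated critical point of V; if R(x₀) is negative definite, then x₀ is a strict local minimum of V and is an isolated critical point of V. -/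
open Real Set Topology Filter Matrix

/-- Action–action components of the Ricci tensor of the toric Kähler metric with
symplectic potential `u`, in action coordinates. -/
noncomputable def ricA {n : ℕ} (u : (Fin n → ℝ) → ℝ) (x : Fin n → ℝ) :
    Matrix (Fin n) (Fin n) ℝ :=
  Matrix.of fun i j =>
    -(∑ l, ∑ k, Hess u x i l
        * pd j (fun y => ((Hess u y)⁻¹) l k
            * pd k (fun z => Real.log (orbVol u z)) y) x)


variable {n : ℕ}


lemma contDiffAt_pd {f : (Fin n → ℝ) → ℝ} {x : Fin n → ℝ} (i : Fin n)
    (hf : ContDiffAt ℝ (⊤ : ℕ∞) f x) : ContDiffAt ℝ (⊤ : ℕ∞) (pd i f) x := by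
  have h1 : ContDiffAt ℝ (⊤ : ℕ∞) (fderiv ℝ f) x :=
    hf.fderiv_right (le_of_eq (by simp))
  exact h1.clm_apply contDiffAt_const


lemma contDiffAt_hessEntry {u : (Fin n → ℝ) → ℝ} {x : Fin n → ℝ} (i j : Fin n)
    (hu : ContDiffAt ℝ (⊤ : ℕ∞) u x) :
    ContDiffAt ℝ (⊤ : ℕ∞) (fun y => Hess u y i j) x :=
  contDiffAt_pd i (contDiffAt_pd j hu)

lemma contDiffAt_hessDet {u : (Fin n → ℝ) → ℝ} {x : Fin n → ℝ}
    (hu : ContDiffAt ℝ (⊤ : ℕ∞) u x) :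
    ContDiffAt ℝ (⊤ : ℕ∞) (fun y => (Hess u y).det) x := by
  simp only [Matrix.det_apply']
  exact ContDiffAt.sum fun σ _ => contDiffAt_const.mul
    (contDiffAt_prod fun i _ => contDiffAt_hessEntry _ _ hu)

lemma contDiffAt_hessInvEntry {u : (Fin n → ℝ) → ℝ} {x : Fin n → ℝ} (l k : Fin n)
    (hu : ContDiffAt ℝ (⊤ : ℕ∞) u x) (hdet : (Hess u x).det ≠ 0) :
    ContDiffAt ℝ (⊤ : ℕ∞) (fun y => (Hess u y)⁻¹ l k) x := by
  have heq : (fun y => (Hess u y)⁻¹ l k)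
      = fun y => ((Hess u y).det)⁻¹ * (((Hess u y).updateRow k (Pi.single l 1)).det) := by
    funext y
    rw [Matrix.inv_def]
    simp [Ring.inverse_eq_inv', Matrix.adjugate_apply]
  rw [heq]
  refine ((contDiffAt_hessDet hu).inv hdet).mul ?_
  simp only [Matrix.det_apply']
  refine ContDiffAt.sum fun σ _ => contDiffAt_const.mul (contDiffAt_prod fun i _ => ?_)
  by_cases h : σ i = k
  · simp only [Matrix.updateRow_apply, h, if_true]
    exact contDiffAt_const
  · simp only [Matrix.updateRow_apply, h, if_false]
    exact contDiffAt_hessEntry _ _ hu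


lemma orbVol_pos {u : (Fin n → ℝ) → ℝ} {x : Fin n → ℝ} (h : 0 < (Hess u x).det) :
    0 < orbVol u x := Real.rpow_pos_of_pos h _

lemma contDiffAt_orbVol {u : (Fin n → ℝ) → ℝ} {x : Fin n → ℝ}
    (hu : ContDiffAt ℝ (⊤ : ℕ∞) u x) (hdet : (Hess u x).det ≠ 0) :
    ContDiffAt ℝ (⊤ : ℕ∞) (orbVol u) x :=
  (contDiffAt_hessDet hu).rpow_const_of_ne hdet

lemma contDiffAt_logOrbVol {u : (Fin n → ℝ) → ℝ} {x : Fin n → ℝ}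
    (hu : ContDiffAt ℝ (⊤ : ℕ∞) u x) (hdet : 0 < (Hess u x).det) :
    ContDiffAt ℝ (⊤ : ℕ∞) (fun z => Real.log (orbVol u z)) x :=
  (contDiffAt_orbVol hu hdet.ne').log (orbVol_pos hdet).ne'

lemma hasFDerivAt_logOrbVol {u : (Fin n → ℝ) → ℝ} {x : Fin n → ℝ}
    (hu : ContDiffAt ℝ (⊤ : ℕ∞) u x) (hdet : 0 < (Hess u x).det) :
    HasFDerivAt (fun z => Real.log (orbVol u z))
      ((orbVol u x)⁻¹ • fderiv ℝ (orbVol u) x) x :=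
  (Real.hasDerivAt_log (orbVol_pos hdet).ne').comp_hasFDerivAt x
    ((contDiffAt_orbVol hu hdet.ne').differentiableAt (by simp)).hasFDerivAt


lemma apply_eq_sum (T : (Fin n → ℝ) →L[ℝ] ℝ) (v : Fin n → ℝ) :
    T v = ∑ i, v i * T (Pi.single i 1) := by
  conv_lhs => rw [← Finset.univ_sum_single v]
  rw [map_sum]
  refine Finset.sum_congr rfl fun i _ => ?_
  have h : Pi.single i (v i) = v i • (Pi.single i (1:ℝ) : Fin n → ℝ) := by
    rw [← Pi.single_smul]; simp
  rw [h, _root_.map_smul, smul_eq_mul]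

lemma quad_eq (A : (Fin n → ℝ) →L[ℝ] (Fin n → ℝ) →L[ℝ] ℝ) (v : Fin n → ℝ) :
    A v v = ∑ i, v i * ∑ j, v j * A (Pi.single j 1) (Pi.single i 1) := by
  rw [apply_eq_sum (A v) v]
  refine Finset.sum_congr rfl fun i _ => ?_
  congr 1
  have h := apply_eq_sum (A.flip (Pi.single i 1)) v
  simpa [ContinuousLinearMap.flip_apply] using h

lemma ricA_eq {u : (Fin n → ℝ) → ℝ} {x₀ : Fin n → ℝ}
    (hu : ContDiffAt ℝ (⊤ : ℕ∞) u x₀) (hdet : 0 < (Hess u x₀).det)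
    (hcrit : fderiv ℝ (fun z => Real.log (orbVol u z)) x₀ = 0) (i j : Fin n) :
    ricA u x₀ i j
      = -(fderiv ℝ (fderiv ℝ (fun z => Real.log (orbVol u z))) x₀
          (Pi.single j 1) (Pi.single i 1)) := by
  set f : (Fin n → ℝ) → ℝ := fun z => Real.log (orbVol u z) with hf
  set A := fderiv ℝ (fderiv ℝ f) x₀ with hA
  have hfcd : ContDiffAt ℝ (⊤ : ℕ∞) f x₀ := contDiffAt_logOrbVol hu hdet
  have hgcd : ContDiffAt ℝ (⊤ : ℕ∞) (fderiv ℝ f) x₀ :=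
    hfcd.fderiv_right (le_of_eq (by simp))
  have hpdk0 : ∀ k : Fin n, pd k f x₀ = 0 := by
    intro k; simp [pd, hcrit]
  have hpdfd : ∀ k : Fin n, fderiv ℝ (pd k f) x₀ = A.flip (Pi.single k 1) := by
    intro k
    have := fderiv_clm_apply (𝕜 := ℝ) (c := fderiv ℝ f)
      (u := fun _ : Fin n → ℝ => (Pi.single k 1 : Fin n → ℝ))
      (hgcd.differentiableAt (by simp)) (differentiableAt_const _)
    simp only [fderiv_fun_const, Pi.zero_apply, ContinuousLinearMap.comp_zero, zero_add] at this
    exact this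
  have inner : ∀ l k : Fin n,
      pd j (fun y => ((Hess u y)⁻¹) l k * pd k f y) x₀
        = (Hess u x₀)⁻¹ l k * (A (Pi.single j 1) (Pi.single k 1)) := by
    intro l k
    have ha : DifferentiableAt ℝ (fun y => ((Hess u y)⁻¹) l k) x₀ :=
      (contDiffAt_hessInvEntry l k hu hdet.ne').differentiableAt (by simp)
    have hb : DifferentiableAt ℝ (pd k f) x₀ :=
      (contDiffAt_pd k hfcd).differentiableAt (by simp)
    show fderiv ℝ (fun y => ((Hess u y)⁻¹) l k * pd k f y) x₀ (Pi.single j 1) = _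
    rw [fderiv_fun_mul ha hb]
    simp only [ContinuousLinearMap.add_apply, ContinuousLinearMap.smul_apply,
      hpdk0 k, zero_smul, ContinuousLinearMap.zero_apply, smul_eq_mul, mul_zero, add_zero]
    rw [hpdfd k]
    simp [ContinuousLinearMap.flip_apply]
  have hone : Hess u x₀ * (Hess u x₀)⁻¹ = 1 :=
    Matrix.mul_nonsing_inv _ (isUnit_iff_ne_zero.mpr hdet.ne')
  have : ricA u x₀ i j
      = -(∑ l, ∑ k, Hess u x₀ i l * ((Hess u x₀)⁻¹ l k * (A (Pi.single j 1) (Pi.single k 1)))) := by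
    show -(∑ l, ∑ k, _) = _
    congr 1
    exact Finset.sum_congr rfl fun l _ => Finset.sum_congr rfl fun k _ => by rw [inner l k]
  rw [this]
  congr 1
  rw [Finset.sum_comm]
  calc ∑ k, ∑ l, Hess u x₀ i l * ((Hess u x₀)⁻¹ l k * (A (Pi.single j 1) (Pi.single k 1)))
      = ∑ k, (∑ l, Hess u x₀ i l * (Hess u x₀)⁻¹ l k) * (A (Pi.single j 1) (Pi.single k 1)) := by
        refine Finset.sum_congr rfl fun k _ => ?_
        rw [Finset.sum_mul]
        exact Finset.sum_congr rfl fun l _ => by ring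
    _ = ∑ k, (1 : Matrix (Fin n) (Fin n) ℝ) i k * (A (Pi.single j 1) (Pi.single k 1)) := by
        refine Finset.sum_congr rfl fun k _ => ?_
        rw [← Matrix.mul_apply, hone]
    _ = A (Pi.single j 1) (Pi.single i 1) := by
        simp [Matrix.one_apply, ite_mul]
lemma localmax {E : Type*} [NormedAddCommGroup E] [NormedSpace ℝ E] {f : E → ℝ} {g : E → E →L[ℝ] ℝ} {A : E →L[ℝ] E →L[ℝ] ℝ} {x₀ : E} {c : ℝ}
    (hc : 0 < c) (hdiff : ∀ᶠ y in 𝓝 x₀, HasFDerivAt f (g y) y)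
    (hg0 : g x₀ = 0) (hA : HasStrictFDerivAt g A x₀)
    (hneg : ∀ v : E, A v v ≤ -c * ‖v‖ ^ 2) :
    ∀ᶠ y in 𝓝 x₀, y ≠ x₀ → f y < f x₀ := by
  have hlo := hA.isLittleO
  have h2 : ∀ᶠ p : E × E in 𝓝 (x₀, x₀), ‖g p.1 - g p.2 - A (p.1 - p.2)‖ ≤ c/2 * ‖p.1 - p.2‖ :=
    hlo.def (by positivity)
  have htend : Tendsto (fun y : E => (y, x₀)) (𝓝 x₀) (𝓝 (x₀, x₀)) :=
    tendsto_id.prodMk_nhds tendsto_const_nhds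
  have hEst : ∀ᶠ y in 𝓝 x₀, ‖g y - A (y - x₀)‖ ≤ c/2 * ‖y - x₀‖ := by
    filter_upwards [htend.eventually h2] with y hy
    simpa [hg0] using hy
  rcases Metric.eventually_nhds_iff_ball.1 (hEst.and hdiff) with ⟨δ, hδ, hball⟩
  rw [Metric.eventually_nhds_iff_ball]
  refine ⟨δ, hδ, fun y hy hne => ?_⟩
  set v : E := y - x₀ with hv
  have hvmem : ‖v‖ < δ := by
    rw [hv]; simpa [dist_eq_norm] using hy
  have hvne : v ≠ 0 := sub_ne_zero.2 hne
  have hvpos : 0 < ‖v‖ := norm_pos_iff.2 hvne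
  set p : ℝ → E := fun t => x₀ + t • v with hp
  have hpt : ∀ t ∈ Icc (0:ℝ) 1, p t ∈ Metric.ball x₀ δ := by
    intro t ht
    simp only [hp, Metric.mem_ball, dist_eq_norm, add_sub_cancel_left, norm_smul,
      Real.norm_eq_abs]
    calc |t| * ‖v‖ ≤ 1 * ‖v‖ := by
          apply mul_le_mul_of_nonneg_right _ (norm_nonneg v)
          rw [abs_le]; exact ⟨le_trans (by norm_num) ht.1, ht.2⟩
      _ < δ := by simpa using hvmem
  have hder : ∀ t ∈ Icc (0:ℝ) 1, HasDerivAt (fun s => f (p s)) (g (p t) v) t := by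
    intro t ht
    have h1 : HasDerivAt p v t := by
      simpa [hp] using ((hasDerivAt_id t).smul_const v).const_add x₀
    exact ((hball (p t) (hpt t ht)).2.comp_hasDerivAt t h1)
  have hcont : ContinuousOn (fun s => f (p s)) (Icc (0:ℝ) 1) :=
    fun t ht => ((hder t ht).continuousAt).continuousWithinAt
  obtain ⟨τ, hτ, hslope⟩ := exists_hasDerivAt_eq_slope (fun s => f (p s)) _ zero_lt_one
    hcont (fun t ht => hder t ⟨ht.1.le, ht.2.le⟩)
  have hp0 : p 0 = x₀ := by simp [hp]
  have hp1 : p 1 = y := by simp [hp, hv]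
  have hkey : g (p τ) v < 0 := by
    have hptx : p τ - x₀ = τ • v := by simp [hp]
    have hest := (hball (p τ) (hpt τ ⟨hτ.1.le, hτ.2.le⟩)).1
    rw [hptx] at hest
    have hτpos : 0 < τ := hτ.1
    have hnorm : ‖τ • v‖ = τ * ‖v‖ := by
      rw [norm_smul, Real.norm_eq_abs, abs_of_pos hτpos]
    have hsplit : g (p τ) v = (g (p τ) - A (τ • v)) v + τ * (A v v) := by
      have : A (τ • v) v = τ * (A v v) := by
        rw [_root_.map_smul]; simp
      simp [ContinuousLinearMap.sub_apply, this]
    have h1 : (g (p τ) - A (τ • v)) v ≤ c/2 * (τ * ‖v‖) * ‖v‖ := by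
      calc (g (p τ) - A (τ • v)) v ≤ ‖(g (p τ) - A (τ • v)) v‖ := le_abs_self _
        _ ≤ ‖g (p τ) - A (τ • v)‖ * ‖v‖ := ContinuousLinearMap.le_opNorm _ _
        _ ≤ c/2 * ‖τ • v‖ * ‖v‖ := by
            apply mul_le_mul_of_nonneg_right hest (norm_nonneg v)
        _ = c/2 * (τ * ‖v‖) * ‖v‖ := by rw [hnorm]
    have h2' : τ * (A v v) ≤ τ * (-c * ‖v‖ ^ 2) :=
      mul_le_mul_of_nonneg_left (hneg v) hτpos.le
    rw [hsplit]
    nlinarith [h1, h2', mul_pos (mul_pos hc hτpos) (pow_pos hvpos 2)]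
  rw [hslope] at hkey
  rw [hp0, hp1] at hkey
  have : f y - f x₀ < 0 := by
    have h10 : (1:ℝ) - 0 = 1 := by norm_num
    rw [h10, div_one] at hkey
    exact hkey
  linarith
lemma quad_bound {A : (Fin n → ℝ) →L[ℝ] (Fin n → ℝ) →L[ℝ] ℝ} (hn : 0 < n)
    (h : ∀ v : Fin n → ℝ, v ≠ 0 → A v v < 0) :
    ∃ c > 0, ∀ v : Fin n → ℝ, A v v ≤ -c * ‖v‖ ^ 2 := by
  haveI : Nonempty (Fin n) := ⟨⟨0, hn⟩⟩
  have hcomp : IsCompact (Metric.sphere (0 : Fin n → ℝ) 1) := isCompact_sphere 0 1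
  have hcont : Continuous fun v : Fin n → ℝ => A v v :=
    isBoundedBilinearMap_apply.continuous.comp (A.continuous.prodMk continuous_id)
  have hne : (Metric.sphere (0 : Fin n → ℝ) 1).Nonempty := by
    refine ⟨Pi.single ⟨0, hn⟩ 1, ?_⟩
    have : ‖(Pi.single (⟨0, hn⟩ : Fin n) (1:ℝ) : Fin n → ℝ)‖ = 1 := by
      rw [Pi.norm_single]; norm_num
    simp [Metric.mem_sphere, dist_eq_norm, this]
  obtain ⟨v₀, hv₀mem, hv₀max⟩ := hcomp.exists_isMaxOn hne hcont.continuousOn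
  have hv₀norm : ‖v₀‖ = 1 := by simpa [dist_eq_norm] using hv₀mem
  have hv₀ne : v₀ ≠ 0 := by
    intro h0; rw [h0] at hv₀norm; simp at hv₀norm
  refine ⟨-(A v₀ v₀), by linarith [h v₀ hv₀ne], fun v => ?_⟩
  by_cases hv : v = 0
  · simp [hv]
  · have hvpos : 0 < ‖v‖ := norm_pos_iff.2 hv
    set w : Fin n → ℝ := ‖v‖⁻¹ • v with hw
    have hwnorm : ‖w‖ = 1 := by
      rw [hw, norm_smul, norm_inv, norm_norm, inv_mul_cancel₀ hvpos.ne']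
    have hwmem : w ∈ Metric.sphere (0 : Fin n → ℝ) 1 := by
      simp [dist_eq_norm, hwnorm]
    have hmax : A w w ≤ A v₀ v₀ := hv₀max hwmem
    have hvw : v = ‖v‖ • w := by
      rw [hw, smul_smul, mul_inv_cancel₀ hvpos.ne', one_smul]
    have hexpand : A v v = ‖v‖ ^ 2 * (A w w) := by
      conv_lhs => rw [hvw]
      simp only [_root_.map_smul, ContinuousLinearMap.smul_apply, smul_eq_mul]
      ring
    rw [hexpand]
    have := mul_le_mul_of_nonneg_left hmax (sq_nonneg ‖v‖)
    nlinarith [this]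
lemma isolated_crit {g : (Fin n → ℝ) → (Fin n → ℝ) →L[ℝ] ℝ}
    {A : (Fin n → ℝ) →L[ℝ] (Fin n → ℝ) →L[ℝ] ℝ} {x₀ : Fin n → ℝ}
    (hA : HasStrictFDerivAt g A x₀) (hg0 : g x₀ = 0)
    (hinj : ∀ v : Fin n → ℝ, v ≠ 0 → A v v ≠ 0) :
    ∀ᶠ y in 𝓝 x₀, y ≠ x₀ → g y ≠ 0 := by
  have hAinj : Function.Injective (A : (Fin n → ℝ) →ₗ[ℝ] ((Fin n → ℝ) →L[ℝ] ℝ)) := by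
    rw [← LinearMap.ker_eq_bot, LinearMap.ker_eq_bot']
    intro v hv
    by_contra hvne
    exact hinj v hvne (by simp only [ContinuousLinearMap.coe_coe] at hv; rw [hv]; rfl)
  have hfr : Module.finrank ℝ ((Fin n → ℝ) →L[ℝ] ℝ) = Module.finrank ℝ (Fin n → ℝ) := by
    rw [(LinearMap.toContinuousLinearMap :
      ((Fin n → ℝ) →ₗ[ℝ] ℝ) ≃ₗ[ℝ] ((Fin n → ℝ) →L[ℝ] ℝ)).symm.finrank_eq]
    exact Subspace.dual_finrank_eq
  have hsurj : Function.Surjective (A : (Fin n → ℝ) →ₗ[ℝ] ((Fin n → ℝ) →L[ℝ] ℝ)) :=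
    (LinearMap.injective_iff_surjective_of_finrank_eq_finrank hfr.symm).mp hAinj
  let eqv : (Fin n → ℝ) ≃L[ℝ] ((Fin n → ℝ) →L[ℝ] ℝ) :=
    (LinearEquiv.ofBijective (A : (Fin n → ℝ) →ₗ[ℝ] ((Fin n → ℝ) →L[ℝ] ℝ)) ⟨hAinj, hsurj⟩).toContinuousLinearEquiv
  have hA' : HasStrictFDerivAt g (eqv : (Fin n → ℝ) →L[ℝ] ((Fin n → ℝ) →L[ℝ] ℝ)) x₀ := by
    have : (eqv : (Fin n → ℝ) →L[ℝ] ((Fin n → ℝ) →L[ℝ] ℝ)) = A := by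
      ext v : 1; rfl
    rwa [this]
  have h1 := hA'.eventually_left_inverse
  have h0 : hA'.localInverse g eqv x₀ (g x₀) = x₀ := h1.self_of_nhds
  filter_upwards [h1] with y hy hne hgy
  apply hne
  rw [← hy, hgy, ← hg0, h0]


theorem stmt6 (n : ℕ) (Ω : Set (Fin n → ℝ)) (hΩ : IsOpen Ω)
    (u : (Fin n → ℝ) → ℝ) (hu : ContDiffOn ℝ (⊤ : ℕ∞) u Ω)
    (hpos : ∀ x ∈ Ω, (Hess u x).PosDef)
    (x₀ : Fin n → ℝ) (hx₀ : x₀ ∈ Ω)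
    (hcrit : fderiv ℝ (orbVol u) x₀ = 0) :
    ((ricA u x₀).PosDef →
      (∀ᶠ y in 𝓝[≠] x₀, orbVol u y < orbVol u x₀) ∧
      (∀ᶠ y in 𝓝[≠] x₀, fderiv ℝ (orbVol u) y ≠ 0)) ∧
    ((-(ricA u x₀)).PosDef →
      (∀ᶠ y in 𝓝[≠] x₀, orbVol u x₀ < orbVol u y) ∧
      (∀ᶠ y in 𝓝[≠] x₀, fderiv ℝ (orbVol u) y ≠ 0)) := by
  rcases Nat.eq_zero_or_pos n with hn | hn
  · subst hn
    haveI : Subsingleton (Fin 0 → ℝ) := ⟨fun a b => funext fun i => i.elim0⟩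
    have hemp : ({x₀}ᶜ : Set (Fin 0 → ℝ)) = ∅ := by
      ext y; simp [Subsingleton.elim y x₀]
    have hbot : (𝓝[≠] x₀) = ⊥ := by rw [hemp, nhdsWithin_empty]
    rw [hbot]
    simp
  -- main case
  set f : (Fin n → ℝ) → ℝ := fun z => Real.log (orbVol u z) with hfdef
  set g := fderiv ℝ f with hgdef
  set A := fderiv ℝ g x₀ with hAdef
  have hcdu : ∀ y ∈ Ω, ContDiffAt ℝ (⊤ : ℕ∞) u y := fun y hy =>
    hu.contDiffAt (hΩ.mem_nhds hy)
  have hdet : ∀ y ∈ Ω, 0 < (Hess u y).det := fun y hy => (hpos y hy).det_pos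
  have hung : ∀ᶠ y in 𝓝 x₀, y ∈ Ω := hΩ.mem_nhds hx₀
  have hVd : ∀ y ∈ Ω, HasFDerivAt f ((orbVol u y)⁻¹ • fderiv ℝ (orbVol u) y) y :=
    fun y hy => hasFDerivAt_logOrbVol (hcdu y hy) (hdet y hy)
  have hfcrit : fderiv ℝ f x₀ = 0 := by
    rw [(hVd x₀ hx₀).fderiv, hcrit, smul_zero]
  have hg0 : g x₀ = 0 := hfcrit
  have hfcd : ContDiffAt ℝ (⊤ : ℕ∞) f x₀ := contDiffAt_logOrbVol (hcdu x₀ hx₀) (hdet x₀ hx₀)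
  have hgcd : ContDiffAt ℝ (⊤ : ℕ∞) g x₀ := hfcd.fderiv_right (le_of_eq (by simp))
  have hgstrict : HasStrictFDerivAt g A x₀ :=
    hgcd.hasStrictFDerivAt (by simp)
  have hric : ∀ i j, ricA u x₀ i j = -(A (Pi.single j 1) (Pi.single i 1)) :=
    fun i j => ricA_eq (hcdu x₀ hx₀) (hdet x₀ hx₀) hfcrit i j
  have key : ∀ v : Fin n → ℝ, dotProduct v ((ricA u x₀) *ᵥ v) = -(A v v) := by
    intro v
    have h1 : dotProduct v ((ricA u x₀) *ᵥ v) = ∑ i, ∑ j, v i * (ricA u x₀ i j * v j) := by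
      simp [dotProduct, Matrix.mulVec, Finset.mul_sum]
    have h2 : -(A v v) = ∑ i, ∑ j, -(v i * (v j * A (Pi.single j 1) (Pi.single i 1))) := by
      rw [quad_eq A v, ← Finset.sum_neg_distrib]
      exact Finset.sum_congr rfl fun i _ => by
        rw [Finset.mul_sum, ← Finset.sum_neg_distrib]
    rw [h1, h2]
    exact Finset.sum_congr rfl fun i _ => Finset.sum_congr rfl fun j _ => by
      rw [hric i j]; ring
  have hdiffev : ∀ᶠ y in 𝓝 x₀, HasFDerivAt f (g y) y := by
    filter_upwards [hung] with y hy
    exact ((contDiffAt_logOrbVol (hcdu y hy) (hdet y hy)).differentiableAt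
      (by simp)).hasFDerivAt
  have hmem : ∀ᶠ y in 𝓝[≠] x₀, y ≠ x₀ := by
    have := self_mem_nhdsWithin (a := x₀) (s := {x₀}ᶜ)
    exact eventually_mem_nhdsWithin
  -- conversion of the isolation statement
  have iso_conv : (∀ᶠ y in 𝓝 x₀, y ≠ x₀ → g y ≠ 0) →
      (∀ᶠ y in 𝓝[≠] x₀, fderiv ℝ (orbVol u) y ≠ 0) := by
    intro hiso
    filter_upwards [(hiso.and hung).filter_mono nhdsWithin_le_nhds, hmem] with y hy hyne hV0
    refine hy.1 hyne ?_
    rw [hgdef, (hVd y hy.2).fderiv, hV0, smul_zero]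
  constructor
  · intro hPD
    have hAneg : ∀ v : Fin n → ℝ, v ≠ 0 → A v v < 0 := by
      intro v hv
      have := hPD.dotProduct_mulVec_pos hv
      rw [star_trivial, key v] at this
      linarith
    obtain ⟨c, hc, hbound⟩ := quad_bound hn hAneg
    have hmax := localmax hc hdiffev hg0 hgstrict hbound
    have hiso := isolated_crit hgstrict hg0 (fun v hv => (hAneg v hv).ne)
    refine ⟨?_, iso_conv hiso⟩
    filter_upwards [(hmax.and hung).filter_mono nhdsWithin_le_nhds, hmem] with y hy hyne
    have h1 : f y < f x₀ := hy.1 hyne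
    have hVy : 0 < orbVol u y := orbVol_pos (hdet y hy.2)
    have hVx : 0 < orbVol u x₀ := orbVol_pos (hdet x₀ hx₀)
    have := Real.exp_lt_exp.mpr h1
    rwa [hfdef, Real.exp_log hVy, Real.exp_log hVx] at this
  · intro hPD
    have hApos : ∀ v : Fin n → ℝ, v ≠ 0 → 0 < A v v := by
      intro v hv
      have := hPD.dotProduct_mulVec_pos hv
      rw [star_trivial, Matrix.neg_mulVec, dotProduct_neg, key v] at this
      linarith
    have hAneg' : ∀ v : Fin n → ℝ, v ≠ 0 → (-A) v v < 0 := by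
      intro v hv
      simp only [ContinuousLinearMap.neg_apply]
      linarith [hApos v hv]
    obtain ⟨c, hc, hbound⟩ := quad_bound hn hAneg'
    have hdiffev' : ∀ᶠ y in 𝓝 x₀, HasFDerivAt (fun z => -f z) (-(g y)) y := by
      filter_upwards [hdiffev] with y hy
      exact hy.neg
    have hg0' : (fun y => -(g y)) x₀ = 0 := by simp [hg0]
    have hmax := localmax hc hdiffev' hg0' hgstrict.neg hbound
    have hiso := isolated_crit hgstrict hg0 (fun v hv => (hApos v hv).ne')
    refine ⟨?_, iso_conv hiso⟩
    filter_upwards [(hmax.and hung).filter_mono nhdsWithin_le_nhds, hmem] with y hy hyne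
    have h1 : -f y < -f x₀ := hy.1 hyne
    have h1' : f x₀ < f y := by linarith
    have hVy : 0 < orbVol u y := orbVol_pos (hdet y hy.2)
    have hVx : 0 < orbVol u x₀ := orbVol_pos (hdet x₀ hx₀)
    have := Real.exp_lt_exp.mpr h1'
    rwa [hfdef, Real.exp_log hVy, Real.exp_log hVx] at this
end

section
/- Let Δ° = {(x₁,x₂) ∈ ℝ² : x₁ > 0, x₂ > 0, x₁ + x₂ < 1}, let u_G(x₁,x₂) = (1/2)(x₁ log x₁ − x₁ + x₂ log x₂ − x₂ + (1−x₁−x₂) log(1−x₁−x₂) − (1−x₁−x₂)), and let f be a real-analytic function on an open neighbourhood of [0,1] satisfying 1 + t(1−t) f''(t) > 0 for all t ∈ (0,1). Then the set of critical points of det Hess(u_G + (1/2) f(x₁+x₂)) in Δ° is finite. -/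
open Real Set Topology Filter Matrix

/-- Guillemin symplectic potential of `ℂP²` on the standard simplex. -/
noncomputable def uGCP2 : (Fin 2 → ℝ) → ℝ := fun x =>
  (1/2) * (x 0 * Real.log (x 0) - x 0 + x 1 * Real.log (x 1) - x 1
    + (1 - x 0 - x 1) * Real.log (1 - x 0 - x 1) - (1 - x 0 - x 1))

/-- The open standard simplex in `ℝ²`. -/
def simplex2 : Set (Fin 2 → ℝ) := {x | 0 < x 0 ∧ 0 < x 1 ∧ x 0 + x 1 < 1}

abbrev pr (i : Fin 2) : (Fin 2 → ℝ) →L[ℝ] ℝ := ContinuousLinearMap.proj i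

lemma hasFDerivAt_coord (x : Fin 2 → ℝ) (i : Fin 2) :
    HasFDerivAt (fun z : Fin 2 → ℝ => z i) (pr i) x := (pr i).hasFDerivAt

lemma hasFDerivAt_sum (x : Fin 2 → ℝ) :
    HasFDerivAt (fun z : Fin 2 → ℝ => z 0 + z 1) (pr 0 + pr 1) x :=
  (hasFDerivAt_coord x 0).add (hasFDerivAt_coord x 1)

lemma hasFDerivAt_lin (x : Fin 2 → ℝ) :
    HasFDerivAt (fun z : Fin 2 → ℝ => 1 - z 0 - z 1) (-pr 0 - pr 1) x := by
  have h := ((hasFDerivAt_const (1:ℝ) x).sub (hasFDerivAt_coord x 0)).sub (hasFDerivAt_coord x 1)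
  refine h.congr_fderiv ?_
  ext v
  simp

lemma hasDerivAt_philog {a : ℝ} (ha : 0 < a) :
    HasDerivAt (fun a : ℝ => a * Real.log a - a) (Real.log a) a := by
  have h := ((hasDerivAt_id a).mul (Real.hasDerivAt_log ha.ne')).sub (hasDerivAt_id a)
  refine h.congr_deriv ?_
  simp [ha.ne']

lemma isOpen_simplex2 : IsOpen simplex2 := by
  have h0 : IsOpen {x : Fin 2 → ℝ | 0 < x 0} := isOpen_lt continuous_const (continuous_apply 0)
  have h1 : IsOpen {x : Fin 2 → ℝ | 0 < x 1} := isOpen_lt continuous_const (continuous_apply 1)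
  have h2 : IsOpen {x : Fin 2 → ℝ | x 0 + x 1 < 1} :=
    isOpen_lt ((continuous_apply 0).add (continuous_apply 1)) continuous_const
  have : simplex2 = {x : Fin 2 → ℝ | 0 < x 0} ∩ ({x | 0 < x 1} ∩ {x | x 0 + x 1 < 1}) := by
    ext x; simp [simplex2, and_assoc]
  rw [this]; exact h0.inter (h1.inter h2)

lemma hasFDerivAt_u {x : Fin 2 → ℝ} (hx : x ∈ simplex2) {g : ℝ → ℝ} {c : ℝ}
    (hg : HasDerivAt g c (x 0 + x 1)) :
    HasFDerivAt (fun z => uGCP2 z + (1/2) * g (z 0 + z 1))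
      (((1/2) * (Real.log (x 0) - Real.log (1 - x 0 - x 1) + c)) • pr 0
        + ((1/2) * (Real.log (x 1) - Real.log (1 - x 0 - x 1) + c)) • pr 1) x := by
  obtain ⟨h0, h1, h2⟩ := hx
  have h3 : 0 < 1 - x 0 - x 1 := by linarith
  have d0 := (hasDerivAt_philog h0).comp_hasFDerivAt x (hasFDerivAt_coord x 0)
  have d1 := (hasDerivAt_philog h1).comp_hasFDerivAt x (hasFDerivAt_coord x 1)
  have d2 := (hasDerivAt_philog h3).comp_hasFDerivAt x (hasFDerivAt_lin x)
  have dg := hg.comp_hasFDerivAt x (hasFDerivAt_sum x)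
  simp only [Function.comp_def] at d0 d1 d2 dg
  have dtot := ((d0.add d1).add d2).const_mul (1/2 : ℝ) |>.add (dg.const_mul (1/2 : ℝ))
  have huu : (fun z => uGCP2 z + (1/2) * g (z 0 + z 1)) =
      fun z : Fin 2 → ℝ => (1/2) * ((z 0 * Real.log (z 0) - z 0) + (z 1 * Real.log (z 1) - z 1)
        + ((1 - z 0 - z 1) * Real.log (1 - z 0 - z 1) - (1 - z 0 - z 1)))
        + (1/2) * g (z 0 + z 1) := by
    funext z; simp only [uGCP2]; ring
  rw [huu]
  refine dtot.congr_fderiv ?_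
  ext v
  simp only [ContinuousLinearMap.add_apply, ContinuousLinearMap.smul_apply,
    ContinuousLinearMap.sub_apply, ContinuousLinearMap.neg_apply,
    ContinuousLinearMap.proj_apply, smul_eq_mul]
  ring

lemma pd_u {x : Fin 2 → ℝ} (hx : x ∈ simplex2) {g : ℝ → ℝ} {c : ℝ}
    (hg : HasDerivAt g c (x 0 + x 1)) (j : Fin 2) :
    pd j (fun z => uGCP2 z + (1/2) * g (z 0 + z 1)) x
      = (1/2) * (Real.log (x j) - Real.log (1 - x 0 - x 1) + c) := by
  have h := (hasFDerivAt_u hx hg).fderiv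
  rw [pd, h]
  have hj : j = 0 ∨ j = 1 := by fin_cases j <;> simp
  rcases hj with rfl | rfl <;>
  · simp only [ContinuousLinearMap.add_apply, ContinuousLinearMap.smul_apply,
      ContinuousLinearMap.proj_apply, smul_eq_mul, Pi.single_eq_same,
      Pi.single_eq_of_ne (by decide : (0 : Fin 2) ≠ 1),
      Pi.single_eq_of_ne (by decide : (1 : Fin 2) ≠ 0)]
    ring

lemma hasFDerivAt_A {x : Fin 2 → ℝ} (hx : x ∈ simplex2) (j : Fin 2) {g : ℝ → ℝ} {c : ℝ}
    (hg : HasDerivAt g c (x 0 + x 1)) :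
    HasFDerivAt (fun z : Fin 2 → ℝ =>
        (1/2) * (Real.log (z j) - Real.log (1 - z 0 - z 1) + g (z 0 + z 1)))
      (((1/2) * (x j)⁻¹) • pr j + ((1/2) * ((1 - x 0 - x 1)⁻¹ + c)) • (pr 0 + pr 1)) x := by
  obtain ⟨h0, h1, h2⟩ := hx
  have hj : 0 < x j := by fin_cases j <;> assumption
  have h3 : 0 < 1 - x 0 - x 1 := by linarith
  have d0 := (Real.hasDerivAt_log hj.ne').comp_hasFDerivAt x (hasFDerivAt_coord x j)
  have d2 := (Real.hasDerivAt_log h3.ne').comp_hasFDerivAt x (hasFDerivAt_lin x)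
  have dg := hg.comp_hasFDerivAt x (hasFDerivAt_sum x)
  simp only [Function.comp_def] at d0 d2 dg
  have dtot := ((d0.sub d2).add dg).const_mul (1/2 : ℝ)
  refine dtot.congr_fderiv ?_
  ext v
  simp only [ContinuousLinearMap.add_apply, ContinuousLinearMap.smul_apply,
    ContinuousLinearMap.sub_apply, ContinuousLinearMap.neg_apply,
    ContinuousLinearMap.proj_apply, smul_eq_mul]
  ring

lemma hess_entry (f : ℝ → ℝ) {x : Fin 2 → ℝ} (hx : x ∈ simplex2)
    (hd : ∀ z ∈ simplex2, HasDerivAt f (deriv f (z 0 + z 1)) (z 0 + z 1))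
    (hd2 : HasDerivAt (deriv f) (deriv (deriv f) (x 0 + x 1)) (x 0 + x 1)) (i j : Fin 2) :
    Hess (fun z => uGCP2 z + (1/2) * f (z 0 + z 1)) x i j
      = (1/2) * ((if i = j then (x j)⁻¹ else 0)
          + ((1 - x 0 - x 1)⁻¹ + deriv (deriv f) (x 0 + x 1))) := by
  have hev : pd j (fun z => uGCP2 z + (1/2) * f (z 0 + z 1)) =ᶠ[𝓝 x]
      (fun z : Fin 2 → ℝ =>
        (1/2) * (Real.log (z j) - Real.log (1 - z 0 - z 1) + deriv f (z 0 + z 1))) := by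
    filter_upwards [isOpen_simplex2.mem_nhds hx] with z hz
    exact pd_u hz (hd z hz) j
  have hH : Hess (fun z => uGCP2 z + (1/2) * f (z 0 + z 1)) x i j
      = fderiv ℝ (fun z : Fin 2 → ℝ =>
        (1/2) * (Real.log (z j) - Real.log (1 - z 0 - z 1) + deriv f (z 0 + z 1))) x
        (Pi.single i 1) := by
    rw [Hess, Matrix.of_apply, pd, hev.fderiv_eq]
  rw [hH, (hasFDerivAt_A hx j hd2).fderiv]
  have hi : i = 0 ∨ i = 1 := by fin_cases i <;> simp
  have hj : j = 0 ∨ j = 1 := by fin_cases j <;> simp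
  rcases hi with rfl | rfl <;> rcases hj with rfl | rfl <;>
  · simp only [ContinuousLinearMap.add_apply, ContinuousLinearMap.smul_apply,
      ContinuousLinearMap.proj_apply, smul_eq_mul, Pi.single_eq_same,
      Pi.single_eq_of_ne (by decide : (0 : Fin 2) ≠ 1),
      Pi.single_eq_of_ne (by decide : (1 : Fin 2) ≠ 0)]
    norm_num <;> ring

lemma det_hess (f : ℝ → ℝ) {x : Fin 2 → ℝ} (hx : x ∈ simplex2)
    (hd : ∀ z ∈ simplex2, HasDerivAt f (deriv f (z 0 + z 1)) (z 0 + z 1))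
    (hd2 : HasDerivAt (deriv f) (deriv (deriv f) (x 0 + x 1)) (x 0 + x 1)) :
    (Hess (fun z => uGCP2 z + (1/2) * f (z 0 + z 1)) x).det
      = (1/4) * (x 0)⁻¹ * (x 1)⁻¹
        * (1 + (x 0 + x 1) * ((1 - x 0 - x 1)⁻¹ + deriv (deriv f) (x 0 + x 1))) := by
  obtain ⟨h0, h1, h2⟩ := hx
  have hx' : x ∈ simplex2 := ⟨h0, h1, h2⟩
  rw [Matrix.det_fin_two, hess_entry f hx' hd hd2 0 0, hess_entry f hx' hd hd2 0 1,
    hess_entry f hx' hd hd2 1 0, hess_entry f hx' hd hd2 1 1]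
  norm_num
  field_simp
  ring

lemma hasFDerivAt_D (f : ℝ → ℝ) {x : Fin 2 → ℝ} (hx : x ∈ simplex2)
    (hd3 : HasDerivAt (deriv (deriv f)) (deriv (deriv (deriv f)) (x 0 + x 1)) (x 0 + x 1)) :
    HasFDerivAt (fun z : Fin 2 → ℝ => (1/4) * (z 0)⁻¹ * (z 1)⁻¹
        * (1 + (z 0 + z 1) * ((1 - z 0 - z 1)⁻¹ + deriv (deriv f) (z 0 + z 1))))
      ((((1/4) * (x 0)⁻¹ * (x 1)⁻¹
          * (((1 - x 0 - x 1)⁻¹ + deriv (deriv f) (x 0 + x 1))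
            + (x 0 + x 1) * (((1 - x 0 - x 1)^2)⁻¹ + deriv (deriv (deriv f)) (x 0 + x 1)))
        - (1/4) * ((x 0)^2)⁻¹ * (x 1)⁻¹
          * (1 + (x 0 + x 1) * ((1 - x 0 - x 1)⁻¹ + deriv (deriv f) (x 0 + x 1)))) • pr 0)
      + (((1/4) * (x 0)⁻¹ * (x 1)⁻¹
          * (((1 - x 0 - x 1)⁻¹ + deriv (deriv f) (x 0 + x 1))
            + (x 0 + x 1) * (((1 - x 0 - x 1)^2)⁻¹ + deriv (deriv (deriv f)) (x 0 + x 1)))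
        - (1/4) * (x 0)⁻¹ * ((x 1)^2)⁻¹
          * (1 + (x 0 + x 1) * ((1 - x 0 - x 1)⁻¹ + deriv (deriv f) (x 0 + x 1)))) • pr 1)) x := by
  obtain ⟨h0, h1, h2⟩ := hx
  have h3 : 0 < 1 - x 0 - x 1 := by linarith
  have inv0 := (hasDerivAt_inv h0.ne').comp_hasFDerivAt x (hasFDerivAt_coord x 0)
  have inv1 := (hasDerivAt_inv h1.ne').comp_hasFDerivAt x (hasFDerivAt_coord x 1)
  have inv2 := (hasDerivAt_inv h3.ne').comp_hasFDerivAt x (hasFDerivAt_lin x)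
  have d3 := hd3.comp_hasFDerivAt x (hasFDerivAt_sum x)
  simp only [Function.comp_def] at inv0 inv1 inv2 d3
  have hP := (hasFDerivAt_const (1:ℝ) x).add ((hasFDerivAt_sum x).mul (inv2.add d3))
  have dtot := (((inv0.const_mul (1/4 : ℝ)).mul inv1).mul hP)
  refine dtot.congr_fderiv ?_
  ext v
  simp only [ContinuousLinearMap.add_apply, ContinuousLinearMap.smul_apply,
    ContinuousLinearMap.sub_apply, ContinuousLinearMap.neg_apply, ContinuousLinearMap.zero_apply,
    ContinuousLinearMap.proj_apply, smul_eq_mul, Pi.mul_apply, Pi.add_apply]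
  ring

lemma zero_set_finite {k : ℝ → ℝ} {V : Set ℝ} (hVc : IsPreconnected V)
    (hIcc : Icc (0:ℝ) 1 ⊆ V) (hk : AnalyticOnNhd ℝ k V) (hk0 : k 0 ≠ 0) :
    {t ∈ Icc (0:ℝ) 1 | k t = 0}.Finite := by
  by_contra h
  have hinf : {t ∈ Icc (0:ℝ) 1 | k t = 0}.Infinite := h
  obtain ⟨t0, ht0, hacc⟩ :=
    hinf.exists_accPt_of_subset_isCompact isCompact_Icc (sep_subset _ _)
  have hfreq : ∃ᶠ z in 𝓝[≠] t0, k z = 0 := by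
    have h2 := accPt_iff_frequently.1 hacc
    rw [frequently_nhdsWithin_iff]
    exact h2.mono fun z hz => ⟨hz.2.2, hz.1⟩
  have heq := hk.eqOn_zero_of_preconnected_of_frequently_eq_zero hVc (hIcc ht0) hfreq
  exact hk0 (heq (hIcc (Set.left_mem_Icc.2 zero_le_one)))

set_option maxHeartbeats 2000000 in
theorem stmt12 (f : ℝ → ℝ) (U : Set ℝ) (hU : IsOpen U) (hU1 : Icc (0:ℝ) 1 ⊆ U)
    (hf : AnalyticOnNhd ℝ f U)
    (hpd : ∀ t ∈ Ioo (0:ℝ) 1, 0 < 1 + t * (1 - t) * deriv (deriv f) t) :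
    {x ∈ simplex2 | fderiv ℝ
      (fun y => (Hess (fun z => uGCP2 z + (1/2) * f (z 0 + z 1)) y).det) x = 0}.Finite := by
  have hfa1 : AnalyticOnNhd ℝ (deriv f) U := hf.deriv
  have hfa2 : AnalyticOnNhd ℝ (deriv (deriv f)) U := hfa1.deriv
  have hfa3 : AnalyticOnNhd ℝ (deriv (deriv (deriv f))) U := hfa2.deriv
  have hsumU : ∀ z ∈ simplex2, z 0 + z 1 ∈ U := fun z hz =>
    hU1 ⟨by have := hz.1; have := hz.2.1; linarith, le_of_lt hz.2.2⟩
  have hd : ∀ z ∈ simplex2, HasDerivAt f (deriv f (z 0 + z 1)) (z 0 + z 1) := fun z hz =>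
    (hf _ (hsumU z hz)).differentiableAt.hasDerivAt
  have hd2 : ∀ z ∈ simplex2, HasDerivAt (deriv f) (deriv (deriv f) (z 0 + z 1)) (z 0 + z 1) :=
    fun z hz => (hfa1 _ (hsumU z hz)).differentiableAt.hasDerivAt
  have hd3 : ∀ z ∈ simplex2,
      HasDerivAt (deriv (deriv f)) (deriv (deriv (deriv f)) (z 0 + z 1)) (z 0 + z 1) :=
    fun z hz => (hfa2 _ (hsumU z hz)).differentiableAt.hasDerivAt
  set kf : ℝ → ℝ := fun t => t * (1 - t) * ((1 - 2*t) * deriv (deriv f) t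
      + t * (1 - t) * deriv (deriv (deriv f)) t)
      + (3*t - 2) * (1 + t * (1 - t) * deriv (deriv f) t) with hkf
  have h0I : (0:ℝ) ∈ Icc (0:ℝ) 1 := Set.left_mem_Icc.2 zero_le_one
  have hIccV : Icc (0:ℝ) 1 ⊆ connectedComponentIn U 0 :=
    isPreconnected_Icc.subset_connectedComponentIn h0I hU1
  have hVU : connectedComponentIn U 0 ⊆ U := connectedComponentIn_subset U 0
  have hkA : AnalyticOnNhd ℝ kf (connectedComponentIn U 0) := by
    apply AnalyticOnNhd.add
    · exact (analyticOnNhd_id.mul (analyticOnNhd_const.sub analyticOnNhd_id)).mul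
        (((analyticOnNhd_const.sub (analyticOnNhd_const.mul analyticOnNhd_id)).mul
            (hfa2.mono hVU)).add
          ((analyticOnNhd_id.mul (analyticOnNhd_const.sub analyticOnNhd_id)).mul
            (hfa3.mono hVU)))
    · exact ((analyticOnNhd_const.mul analyticOnNhd_id).sub analyticOnNhd_const).mul
        (analyticOnNhd_const.add ((analyticOnNhd_id.mul
          (analyticOnNhd_const.sub analyticOnNhd_id)).mul (hfa2.mono hVU)))
  have hk0 : kf 0 ≠ 0 := by norm_num [hkf]
  have hfin : {t ∈ Icc (0:ℝ) 1 | kf t = 0}.Finite :=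
    zero_set_finite isPreconnected_connectedComponentIn hIccV hkA hk0
  have key : ∀ x ∈ {x ∈ simplex2 | fderiv ℝ
      (fun y => (Hess (fun z => uGCP2 z + (1/2) * f (z 0 + z 1)) y).det) x = 0},
      x 0 = x 1 ∧ kf (x 0 + x 1) = 0 := by
    rintro x ⟨hx, hcrit⟩
    obtain ⟨h0, h1, h2⟩ := hx
    have hx' : x ∈ simplex2 := ⟨h0, h1, h2⟩
    have h3 : 0 < 1 - x 0 - x 1 := by linarith
    have hne3 : (1 : ℝ) - x 0 - x 1 ≠ 0 := h3.ne'
    have hdet_ev : (fun y => (Hess (fun z => uGCP2 z + (1/2) * f (z 0 + z 1)) y).det)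
        =ᶠ[𝓝 x] (fun z : Fin 2 → ℝ => (1/4) * (z 0)⁻¹ * (z 1)⁻¹
          * (1 + (z 0 + z 1) * ((1 - z 0 - z 1)⁻¹ + deriv (deriv f) (z 0 + z 1)))) := by
      filter_upwards [isOpen_simplex2.mem_nhds hx'] with z hz
      exact det_hess f hz hd (hd2 z hz)
    have hDf : fderiv ℝ (fun z : Fin 2 → ℝ => (1/4) * (z 0)⁻¹ * (z 1)⁻¹
        * (1 + (z 0 + z 1) * ((1 - z 0 - z 1)⁻¹ + deriv (deriv f) (z 0 + z 1)))) x = 0 := by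
      rw [← hdet_ev.fderiv_eq]; exact hcrit
    rw [(hasFDerivAt_D f hx' (hd3 x hx')).fderiv] at hDf
    have hE0 : (1/4) * (x 0)⁻¹ * (x 1)⁻¹
          * (((1 - x 0 - x 1)⁻¹ + deriv (deriv f) (x 0 + x 1))
            + (x 0 + x 1) * (((1 - x 0 - x 1)^2)⁻¹ + deriv (deriv (deriv f)) (x 0 + x 1)))
        - (1/4) * ((x 0)^2)⁻¹ * (x 1)⁻¹
          * (1 + (x 0 + x 1) * ((1 - x 0 - x 1)⁻¹ + deriv (deriv f) (x 0 + x 1))) = 0 := by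
      have h := congrArg (fun L : (Fin 2 → ℝ) →L[ℝ] ℝ => L (Pi.single (0 : Fin 2) (1:ℝ))) hDf
      simpa [Pi.single_eq_of_ne (by decide : (1 : Fin 2) ≠ 0)] using h
    have hE1 : (1/4) * (x 0)⁻¹ * (x 1)⁻¹
          * (((1 - x 0 - x 1)⁻¹ + deriv (deriv f) (x 0 + x 1))
            + (x 0 + x 1) * (((1 - x 0 - x 1)^2)⁻¹ + deriv (deriv (deriv f)) (x 0 + x 1)))
        - (1/4) * (x 0)⁻¹ * ((x 1)^2)⁻¹
          * (1 + (x 0 + x 1) * ((1 - x 0 - x 1)⁻¹ + deriv (deriv f) (x 0 + x 1))) = 0 := by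
      have h := congrArg (fun L : (Fin 2 → ℝ) →L[ℝ] ℝ => L (Pi.single (1 : Fin 2) (1:ℝ))) hDf
      simpa [Pi.single_eq_of_ne (by decide : (0 : Fin 2) ≠ 1)] using h
    set c2 : ℝ := deriv (deriv f) (x 0 + x 1) with hc2
    set c3 : ℝ := deriv (deriv (deriv f)) (x 0 + x 1) with hc3
    set P : ℝ := 1 + (x 0 + x 1) * ((1 - x 0 - x 1)⁻¹ + c2) with hP
    set Q : ℝ := ((1 - x 0 - x 1)⁻¹ + c2) + (x 0 + x 1) * (((1 - x 0 - x 1)^2)⁻¹ + c3) with hQ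
    have hQP0 : x 0 * Q = P := by
      have h5 : x 0 * Q - P = (4 * (x 0)^2 * (x 1))
          * ((1/4) * (x 0)⁻¹ * (x 1)⁻¹ * Q - (1/4) * ((x 0)^2)⁻¹ * (x 1)⁻¹ * P) := by
        field_simp
      rw [hE0, mul_zero] at h5
      linarith
    have hQP1 : x 1 * Q = P := by
      have h5 : x 1 * Q - P = (4 * (x 0) * (x 1)^2)
          * ((1/4) * (x 0)⁻¹ * (x 1)⁻¹ * Q - (1/4) * (x 0)⁻¹ * ((x 1)^2)⁻¹ * P) := by
        field_simp
      rw [hE1, mul_zero] at h5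
      linarith
    have hN := hpd (x 0 + x 1) ⟨by linarith, by linarith⟩
    rw [← hc2] at hN
    have hPpos : 0 < P := by
      have hPN : P * (1 - x 0 - x 1) = 1 + (x 0 + x 1) * (1 - (x 0 + x 1)) * c2 := by
        rw [hP]; field_simp; ring
      nlinarith [hN, h3]
    have hQne : Q ≠ 0 := by
      intro h; rw [h, mul_zero] at hQP0; linarith
    have heq01 : x 0 = x 1 := mul_right_cancel₀ hQne (by rw [hQP0, hQP1])
    have hsum : (x 0 + x 1) * Q = 2 * P := by rw [add_mul, hQP0, hQP1]; ring
    refine ⟨heq01, ?_⟩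
    have hkfval : kf (x 0 + x 1) = (1 - x 0 - x 1)^2 * ((x 0 + x 1) * Q - 2 * P) := by
      rw [hkf]
      simp only
      rw [← hc2, ← hc3, hP, hQ]
      field_simp
      ring
    rw [hkfval, hsum]
    ring
  have himg : (fun x : Fin 2 → ℝ => x 0 + x 1) '' {x ∈ simplex2 | fderiv ℝ
      (fun y => (Hess (fun z => uGCP2 z + (1/2) * f (z 0 + z 1)) y).det) x = 0}
      ⊆ {t ∈ Icc (0:ℝ) 1 | kf t = 0} := by
    rintro t ⟨x, hxS, rfl⟩
    obtain ⟨-, hk⟩ := key x hxS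
    obtain ⟨⟨h0, h1, h2⟩, -⟩ := hxS
    exact ⟨⟨by show (0:ℝ) ≤ x 0 + x 1; linarith, by show x 0 + x 1 ≤ 1; linarith⟩, hk⟩
  have hinj : Set.InjOn (fun x : Fin 2 → ℝ => x 0 + x 1) {x ∈ simplex2 | fderiv ℝ
      (fun y => (Hess (fun z => uGCP2 z + (1/2) * f (z 0 + z 1)) y).det) x = 0} := by
    intro x hxS y hyS hxy
    obtain ⟨hx01, -⟩ := key x hxS
    obtain ⟨hy01, -⟩ := key y hyS
    simp only at hxy
    funext i
    have hi : i = 0 ∨ i = 1 := by fin_cases i <;> simp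
    rcases hi with rfl | rfl <;> linarith
  exact Set.Finite.of_finite_image (hfin.subset himg) hinj
end
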